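/- For all nonnegative integers $e$ and $n$, and any variable $q$, $\sum_{k=0}^n \binom{n}{k}_q q^{k^2+ek} \prod_{j=k+1+e}^{n+e}(1-q^j) = 1$, where $\binom{n}{k}_q$ denotes the Gaussian ($q$-)binomial coefficient. -/

import Mathlib

/-- The indeterminate `q`, viewed in the field of rational functions over `ℚ`. -/
noncomputable def q : RatFunc ℚ := RatFunc.X

/-- The Gaussian (q-)binomial coefficient `(n choose k)_q`,
defined by `∏_{i=0}^{k-1} (1 - q^(n-i)) / (1 - q^(i+1))`. -/
noncomputable def qbinom (n k : ℕ) : RatFunc ℚ :=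
  ∏ i ∈ Finset.range k, (1 - q ^ (n - i)) / (1 - q ^ (i + 1))

lemma one_sub_q_pow_ne_zero (m : ℕ) : (1 : RatFunc ℚ) - q ^ (m + 1) ≠ 0 := by
  have hq : q = algebraMap (Polynomial ℚ) (RatFunc ℚ) Polynomial.X := rfl
  rw [hq, ← map_pow, ← map_one (algebraMap (Polynomial ℚ) (RatFunc ℚ)), ← map_sub]
  rw [ne_eq, FaithfulSMul.algebraMap_eq_zero_iff]
  intro h
  have := congrArg (fun p => Polynomial.coeff p (m + 1)) h
  simp [Polynomial.coeff_one, Nat.succ_ne_zero] at this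

lemma L1 (n k : ℕ) : qbinom n (k + 1) * (1 - q ^ (k + 1)) = qbinom n k * (1 - q ^ (n - k)) := by
  rw [qbinom, Finset.prod_range_succ, ← qbinom]
  rw [mul_assoc, div_mul_cancel₀ _ (one_sub_q_pow_ne_zero k)]

lemma L2 (n k : ℕ) :
    qbinom (n + 1) (k + 1) * (1 - q ^ (k + 1)) = qbinom n k * (1 - q ^ (n + 1)) := by
  rw [qbinom, qbinom, Finset.prod_div_distrib, Finset.prod_div_distrib]
  rw [Finset.prod_range_succ' (fun i => 1 - q ^ (n + 1 - i)), Finset.prod_range_succ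
    (fun i => 1 - q ^ (i + 1))]
  have hd : (∏ i ∈ Finset.range k, ((1:RatFunc ℚ) - q ^ (i + 1))) ≠ 0 :=
    Finset.prod_ne_zero_iff.2 fun i _ => one_sub_q_pow_ne_zero i
  have hsub : ∀ i, n + 1 - (i + 1) = n - i := fun i => by omega
  simp only [hsub, Nat.sub_zero, pow_zero]
  have hk := one_sub_q_pow_ne_zero k
  field_simp

lemma pascal (n k : ℕ) (hk : k ≤ n) :
    qbinom (n + 1) (k + 1) = q ^ (k + 1) * qbinom n (k + 1) + qbinom n k := by
  have hne := one_sub_q_pow_ne_zero k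
  apply mul_right_cancel₀ hne
  rw [L2, add_mul, mul_assoc, L1]
  have hp : q ^ (k + 1) * q ^ (n - k) = q ^ (n + 1) := by
    rw [← pow_add]; congr 1; omega
  rw [← hp]
  ring

lemma qbinom_self_succ (n : ℕ) : qbinom n (n + 1) = 0 := by
  have := L1 n n
  simp at this
  rcases this with h | h
  · exact h
  · exact absurd h (one_sub_q_pow_ne_zero n)

lemma step (e n : ℕ) :
    ∑ k ∈ Finset.range (n + 1 + 1),
      qbinom (n + 1) k * q ^ (k ^ 2 + e * k) * ∏ j ∈ Finset.Icc (k + 1 + e) (n + 1 + e), (1 - q ^ j)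
    = ∑ k ∈ Finset.range (n + 1),
      qbinom n k * q ^ (k ^ 2 + (e + 1) * k) *
        ∏ j ∈ Finset.Icc (k + 1 + (e + 1)) (n + (e + 1)), (1 - q ^ j) := by
  set t : ℕ → RatFunc ℚ := fun k =>
    qbinom n k * q ^ (k ^ 2 + (e + 1) * k) * ∏ j ∈ Finset.Icc (k + 1 + e) (n + 1 + e), (1 - q ^ j)
    with ht
  rw [Finset.sum_range_succ']
  have key : ∀ k ∈ Finset.range (n + 1),
      qbinom (n + 1) (k + 1) * q ^ ((k + 1) ^ 2 + e * (k + 1)) *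
        ∏ j ∈ Finset.Icc (k + 1 + 1 + e) (n + 1 + e), (1 - q ^ j)
      = (qbinom n k * q ^ (k ^ 2 + (e + 1) * k) *
          ∏ j ∈ Finset.Icc (k + 1 + (e + 1)) (n + (e + 1)), (1 - q ^ j)) + (t (k + 1) - t k) := by
    intro k hk
    rw [Finset.mem_range] at hk
    have hkn : k ≤ n := by omega
    have hicc : Finset.Icc (k + 1 + e) (n + 1 + e)
        = insert (k + 1 + e) (Finset.Icc (k + 2 + e) (n + 1 + e)) := by
      rw [show k + 2 + e = (k + 1 + e) + 1 from by omega, Finset.Icc_add_one_left_eq_Ioc,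
        Finset.Ioc_insert_left (by omega)]
    have hprod : (∏ j ∈ Finset.Icc (k + 1 + e) (n + 1 + e), ((1:RatFunc ℚ) - q ^ j))
        = (1 - q ^ (k + 1 + e)) * ∏ j ∈ Finset.Icc (k + 2 + e) (n + 1 + e), (1 - q ^ j) := by
      rw [hicc, Finset.prod_insert (by simp)]
    have h1 : q ^ ((k + 1) ^ 2 + e * (k + 1)) = q ^ (k ^ 2 + (e + 1) * k) * q ^ (k + 1 + e) := by
      rw [← pow_add]; congr 1; ring
    have h2 : q ^ ((k + 1) ^ 2 + (e + 1) * (k + 1))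
        = q ^ (k ^ 2 + (e + 1) * k) * (q ^ (k + 1 + e) * q ^ (k + 1)) := by
      rw [← pow_add, ← pow_add]; congr 1; ring
    simp only [ht]
    rw [pascal n k hkn,
      show k + 1 + 1 + e = k + 2 + e from by omega,
      show k + 1 + (e + 1) = k + 2 + e from by omega,
      show n + (e + 1) = n + 1 + e from by omega,
      show (k + 1) + 1 + e = k + 2 + e from by omega,
      hprod, h1, h2]
    ring
  rw [Finset.sum_congr rfl key, Finset.sum_add_distrib, Finset.sum_range_sub t]
  have ht0 : t 0 = ∏ j ∈ Finset.Icc (1 + e) (n + 1 + e), (1 - q ^ j) := by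
    simp [ht, qbinom]
  have htn : t (n + 1) = 0 := by
    simp [ht, qbinom_self_succ]
  rw [htn, ht0]
  simp [qbinom]

/-- For all nonnegative integers `e` and `n`,
`∑_{k=0}^n (n choose k)_q q^(k²+ek) ∏_{j=k+1+e}^{n+e} (1-q^j) = 1`. -/
theorem sum_qbinom_identity (e n : ℕ) :
    ∑ k ∈ Finset.range (n + 1),
      qbinom n k * q ^ (k ^ 2 + e * k) * ∏ j ∈ Finset.Icc (k + 1 + e) (n + e), (1 - q ^ j)
    = 1 := by
  induction n generalizing e with
  | zero => simp [qbinom, Finset.Icc_eq_empty_of_lt (by omega : 0 + e < 0 + 1 + e)]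
  | succ n ih =>
    rw [show n + 1 + e = n + 1 + e from rfl]
    calc _ = ∑ k ∈ Finset.range (n + 1),
          qbinom n k * q ^ (k ^ 2 + (e + 1) * k) *
            ∏ j ∈ Finset.Icc (k + 1 + (e + 1)) (n + (e + 1)), (1 - q ^ j) := step e n
      _ = 1 := ih (e + 1)
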